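/- Let 𝒴 ⊆ ℂⁿ be a p-dimensional subspace whose smallest Ritz value η_p of A in 𝒴 satisfies η_p > λ_{p+1}, let i ∈ {1, …, p}, and set 𝒴̃ = span{x_{i+1}, …, x_p}^⊥ ∩ 𝒴 (which is then i-dimensional). Let f : ℝ → ℝ satisfy |f(λ₁)| ≥ ⋯ ≥ |f(λ_i)| > ν_p where ν_p = max_{j ∈ {p+1, …, n}} |f(λⱼ)|. Let η̃_i and η̃'_i be the smallest (i-th largest) Ritz values of A in 𝒴̃ and in 𝒴̃' = f(A)𝒴̃ respectively, let ỹ ∈ 𝒴̃ be a nonzero vector such that ỹ' = f(A)ỹ is a Ritz vector of A in 𝒴̃' associated with η̃'_i (i.e., ỹ' ≠ 0, ρ(ỹ') = η̃'_i, and Aỹ' − η̃'_i ỹ' ⊥ 𝒴̃'), and assume λ_i > η̃'_i. Define ỹ_i = Σ_{j=1}^{i} xⱼ(xⱼᴴỹ) and ỹ° = f(λ_i) ỹ_i + ν_p (ỹ − ỹ_i). Then λ_i > η̃'_i = ρ(ỹ') ≥ ρ(ỹ°) ≥ ρ(ỹ) ≥ η̃_i > λ_{p+1}, and moreover (ρ(ỹ_i)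 − ρ(ỹ°))/(ρ(ỹ°) − ρ(ỹ − ỹ_i)) = (ν_p²/|f(λ_i)|²) · (ρ(ỹ_i) − ρ(ỹ))/(ρ(ỹ) − ρ(ỹ − ỹ_i)). -/

import Mathlib

/-- The Rayleigh quotient `ρ(v) = (vᴴAv)/(vᴴv)` of the Hermitian matrix `A`. -/
noncomputable def rayleigh {n : ℕ} (A : Matrix (Fin n) (Fin n) ℂ)
    (v : EuclideanSpace ℂ (Fin n)) : ℝ :=
  ((inner ℂ v (Matrix.toEuclideanLin A v) : ℂ)).re / ‖v‖ ^ 2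

/-- The `i`-th largest Ritz value (1-indexed, `i ∈ {1, …, dim S}`) of the Hermitian
matrix `A` in the subspace `S`, characterized via the Courant–Fischer max-min
principle applied inside `S` (equivalently, the `i`-th largest eigenvalue of
`SᴴAS` for any orthonormal basis matrix `S`). -/
noncomputable def ritzValue {n : ℕ} (A : Matrix (Fin n) (Fin n) ℂ)
    (S : Submodule ℂ (EuclideanSpace ℂ (Fin n))) (i : ℕ) : ℝ :=
  sSup {r : ℝ | ∃ T : Submodule ℂ (EuclideanSpace ℂ (Fin n)), T ≤ S ∧
    Module.finrank ℂ T = i ∧ ∀ v ∈ T, v ≠ 0 → r ≤ rayleigh A v}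

/-- `f(A) = ∑ j, f(λ_j) x_j x_jᴴ` as a linear operator, for eigenvalues `lam`
and orthonormal eigenvectors `x` of `A`. -/
noncomputable def matFun {n : ℕ} (lam : Fin n → ℝ)
    (x : Fin n → EuclideanSpace ℂ (Fin n)) (f : ℝ → ℝ) :
    EuclideanSpace ℂ (Fin n) →ₗ[ℂ] EuclideanSpace ℂ (Fin n) :=
  ∑ j : Fin n, (f (lam j) : ℂ) • ((innerSL ℂ (x j)).toLinearMap.smulRight (x j))

/-- `y` is a Ritz vector of `A` in `S` associated with the Ritz value `η`:
`y ∈ S`, `y ≠ 0`, `ρ(y) = η` and `Ay − ηy ⊥ S`. -/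
def IsRitzVector {n : ℕ} (A : Matrix (Fin n) (Fin n) ℂ)
    (S : Submodule ℂ (EuclideanSpace ℂ (Fin n))) (η : ℝ)
    (y : EuclideanSpace ℂ (Fin n)) : Prop :=
  y ∈ S ∧ y ≠ 0 ∧ rayleigh A y = η ∧
    ∀ v ∈ S, (inner ℂ v (Matrix.toEuclideanLin A y - (η : ℂ) • y) : ℂ) = 0


open Finset in
private lemma ray_cheby {ι : Type*} (s : Finset ι) (l w m : ι → ℝ)
    (hcorr : ∀ j ∈ s, ∀ k ∈ s, 0 ≤ w j * w k * ((l j - l k) * (m j - m k)))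
    (hW : 0 < ∑ j ∈ s, w j) (hU : 0 < ∑ j ∈ s, m j * w j) :
    (∑ j ∈ s, l j * w j) / (∑ j ∈ s, w j) ≤
      (∑ j ∈ s, l j * (m j * w j)) / (∑ j ∈ s, m j * w j) := by
  rw [div_le_div_iff₀ hW hU]
  have key : 0 ≤ ∑ j ∈ s, ∑ k ∈ s, w j * w k * ((l j - l k) * (m j - m k)) :=
    Finset.sum_nonneg fun j hj => Finset.sum_nonneg fun k hk => hcorr j hj k hk
  have inner_eq : ∀ j ∈ s, (∑ k ∈ s, w j * w k * ((l j - l k) * (m j - m k)))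
      = (l j * (m j * w j)) * (∑ k ∈ s, w k)
        - (l j * w j) * (∑ k ∈ s, m k * w k)
        - (m j * w j) * (∑ k ∈ s, l k * w k)
        + w j * (∑ k ∈ s, l k * (m k * w k)) := by
    intro j _
    rw [Finset.mul_sum, Finset.mul_sum, Finset.mul_sum, Finset.mul_sum,
        ← Finset.sum_sub_distrib, ← Finset.sum_sub_distrib, ← Finset.sum_add_distrib]
    exact Finset.sum_congr rfl fun k _ => by ring
  have expand : ∑ j ∈ s, ∑ k ∈ s, w j * w k * ((l j - l k) * (m j - m k))
      = 2 * ((∑ j ∈ s, l j * (m j * w j)) * (∑ j ∈ s, w j)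
           - (∑ j ∈ s, l j * w j) * (∑ j ∈ s, m j * w j)) := by
    rw [Finset.sum_congr rfl inner_eq]
    rw [Finset.sum_add_distrib, Finset.sum_sub_distrib, Finset.sum_sub_distrib,
        ← Finset.sum_mul, ← Finset.sum_mul, ← Finset.sum_mul, ← Finset.sum_mul]
    ring
  linarith [expand ▸ key]

open Finset in
private lemma ray_dec {ι : Type*} (s : Finset ι) (l w u : ι → ℝ) (c : ℝ)
    (hu : ∀ j, 0 ≤ u j) (huw : ∀ j, u j ≤ w j)
    (hc : ∀ j ∈ s, u j ≠ w j → l j ≤ c)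
    (hU : 0 < ∑ j ∈ s, u j)
    (hcR : c ≤ (∑ j ∈ s, l j * w j) / (∑ j ∈ s, w j)) :
    (∑ j ∈ s, l j * w j) / (∑ j ∈ s, w j) ≤ (∑ j ∈ s, l j * u j) / (∑ j ∈ s, u j) := by
  have hW : 0 < ∑ j ∈ s, w j := lt_of_lt_of_le hU (Finset.sum_le_sum fun j _ => huw j)
  rw [div_le_div_iff₀ hW hU]
  have hd : ∀ j ∈ s, 0 ≤ w j - u j := fun j _ => by linarith [huw j]
  have hld : ∑ j ∈ s, l j * (w j - u j) ≤ c * ∑ j ∈ s, (w j - u j) := by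
    rw [Finset.mul_sum]
    refine Finset.sum_le_sum fun j hj => ?_
    rcases eq_or_ne (u j) (w j) with h | h
    · simp [h]
    · have := hc j hj h
      nlinarith [hd j hj]
  have hD : 0 ≤ ∑ j ∈ s, (w j - u j) := Finset.sum_nonneg hd
  have hcw : c * (∑ j ∈ s, w j) ≤ ∑ j ∈ s, l j * w j := by
    have := (le_div_iff₀ hW).mp hcR
    linarith
  have e1 : ∑ j ∈ s, l j * u j = ∑ j ∈ s, l j * w j - ∑ j ∈ s, l j * (w j - u j) := by
    rw [← Finset.sum_sub_distrib]
    exact Finset.sum_congr rfl fun j _ => by ring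
  have e2 : ∑ j ∈ s, u j = ∑ j ∈ s, w j - ∑ j ∈ s, (w j - u j) := by
    rw [← Finset.sum_sub_distrib]
    exact Finset.sum_congr rfl fun j _ => by ring
  rw [e1, e2]
  nlinarith [mul_le_mul_of_nonneg_right hld (le_of_lt hW),
    mul_le_mul_of_nonneg_right hcw hD]

private lemma ray_eq (P Q W U F2 N2 : ℝ) (hW : 0 < W) (hU : 0 ≤ U) (hF : 0 < F2)
    (hQ : U = 0 → Q = 0) (hWU : 0 < W + U) (hD : 0 < F2 * W + N2 * U) :
    (P / W - (F2 * P + N2 * Q) / (F2 * W + N2 * U)) /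
        ((F2 * P + N2 * Q) / (F2 * W + N2 * U) - Q / U) =
      N2 / F2 * ((P / W - (P + Q) / (W + U)) / ((P + Q) / (W + U) - Q / U)) := by
  rcases eq_or_lt_of_le hU with hU0 | hU0
  · have hQ0 : Q = 0 := hQ hU0.symm
    rw [← hU0, hQ0]
    have e : (F2 * P + N2 * 0) / (F2 * W + N2 * 0) = P / W := by
      rw [mul_zero, add_zero, add_zero, mul_div_mul_left _ _ hF.ne']
    rw [e]
    simp
  · have d1 : P / W - (F2 * P + N2 * Q) / (F2 * W + N2 * U)
        = N2 * (P * U - Q * W) / (W * (F2 * W + N2 * U)) := by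
      rw [div_sub_div _ _ hW.ne' hD.ne', div_eq_div_iff (mul_pos hW hD).ne' (mul_pos hW hD).ne']
      ring
    have d2 : (F2 * P + N2 * Q) / (F2 * W + N2 * U) - Q / U
        = F2 * (P * U - Q * W) / (U * (F2 * W + N2 * U)) := by
      field_simp
      ring
    have d3 : P / W - (P + Q) / (W + U) = (P * U - Q * W) / (W * (W + U)) := by
      field_simp
      ring
    have d4 : (P + Q) / (W + U) - Q / U = (P * U - Q * W) / (U * (W + U)) := by
      field_simp
      ring
    rw [d1, d2, d3, d4]
    rcases eq_or_ne (P * U - Q * W) 0 with h | h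
    · simp [h]
    · rw [div_div_div_comm, div_div_div_comm (P * U - Q * W)]
      rw [div_self h, mul_comm U (F2 * W + N2 * U), ← div_div_div_comm]
      have hD3 : N2 * U + W * F2 ≠ 0 := by rw [add_comm, mul_comm W]; exact hD.ne'
      field_simp
      rw [mul_div_assoc, div_self (by rw [mul_comm W]; exact hD.ne'), mul_one]

set_option maxHeartbeats 2000000 in
/-- For `𝒴̃ = span{x_{i+1},…,x_p}^⊥ ∩ 𝒴` (with `η_p > λ_{p+1}`),
`|f(λ₁)| ≥ ⋯ ≥ |f(λ_i)| > ν_p`, and a Ritz vector `ỹ' = f(A)ỹ` associated with the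
smallest Ritz value `η̃'_i` of `A` in `𝒴̃' = f(A)𝒴̃` with `λ_i > η̃'_i`, the vector
`ỹ° = f(λ_i)ỹ_i + ν_p(ỹ − ỹ_i)` satisfies
`λ_i > η̃'_i = ρ(ỹ') ≥ ρ(ỹ°) ≥ ρ(ỹ) ≥ η̃_i > λ_{p+1}` and
`(ρ(ỹ_i) − ρ(ỹ°))/(ρ(ỹ°) − ρ(ỹ−ỹ_i)) = (ν_p²/|f(λ_i)|²)·(ρ(ỹ_i) − ρ(ỹ))/(ρ(ỹ) − ρ(ỹ−ỹ_i))`.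
(0-indexed: `lam ⟨j⟩` is `λ_{j+1}`.) -/
theorem stmt9 {n p i : ℕ} (hi : 1 ≤ i) (hip : i ≤ p) (hpn : p < n)
    (A : Matrix (Fin n) (Fin n) ℂ) (hA : A.IsHermitian)
    (lam : Fin n → ℝ) (hlam : Antitone lam)
    (x : Fin n → EuclideanSpace ℂ (Fin n)) (hx : Orthonormal ℂ x)
    (heig : ∀ j, Matrix.toEuclideanLin A (x j) = (lam j : ℂ) • x j)
    (Y : Submodule ℂ (EuclideanSpace ℂ (Fin n))) (hY : Module.finrank ℂ Y = p)
    (hηp : lam ⟨p, hpn⟩ < ritzValue A Y p)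
    (Yt : Submodule ℂ (EuclideanSpace ℂ (Fin n)))
    (hYt : Yt = (Submodule.span ℂ (x '' {j | i ≤ (j : ℕ) ∧ (j : ℕ) < p}))ᗮ ⊓ Y)
    (f : ℝ → ℝ) (νp : ℝ)
    (hνp : IsGreatest ((fun j => |f (lam j)|) '' {j : Fin n | p ≤ (j : ℕ)}) νp)
    (hmono : ∀ j k : Fin n, (j : ℕ) ≤ (k : ℕ) → (k : ℕ) < i →
      |f (lam k)| ≤ |f (lam j)|)
    (hgt : νp < |f (lam ⟨i - 1, by omega⟩)|)
    (yt : EuclideanSpace ℂ (Fin n)) (hytY : yt ∈ Yt) (hyt0 : yt ≠ 0)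
    (hRitz : IsRitzVector A (Yt.map (matFun lam x f))
      (ritzValue A (Yt.map (matFun lam x f)) i) (matFun lam x f yt))
    (hlt : ritzValue A (Yt.map (matFun lam x f)) i < lam ⟨i - 1, by omega⟩)
    (yti yto : EuclideanSpace ℂ (Fin n))
    (hyti : yti = ∑ j ∈ Finset.univ.filter (fun j : Fin n => (j : ℕ) < i),
      (inner ℂ (x j) yt : ℂ) • x j)
    (hyto : yto = (f (lam ⟨i - 1, by omega⟩) : ℂ) • yti + (νp : ℂ) • (yt - yti)) :
    (ritzValue A (Yt.map (matFun lam x f)) i < lam ⟨i - 1, by omega⟩ ∧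
      ritzValue A (Yt.map (matFun lam x f)) i = rayleigh A (matFun lam x f yt) ∧
      rayleigh A yto ≤ rayleigh A (matFun lam x f yt) ∧
      rayleigh A yt ≤ rayleigh A yto ∧
      ritzValue A Yt i ≤ rayleigh A yt ∧
      lam ⟨p, hpn⟩ < ritzValue A Yt i) ∧
    (rayleigh A yti - rayleigh A yto) / (rayleigh A yto - rayleigh A (yt - yti)) =
      νp ^ 2 / |f (lam ⟨i - 1, by omega⟩)| ^ 2 *
        ((rayleigh A yti - rayleigh A yt) /
          (rayleigh A yt - rayleigh A (yt - yti))) := by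
  classical
  have hn0 : 0 < n := lt_of_le_of_lt (Nat.zero_le p) hpn
  have hin : i ≤ n := le_trans hip (le_of_lt hpn)
  haveI : Nonempty (Fin n) := ⟨⟨0, hn0⟩⟩
  have hspan : ⊤ ≤ Submodule.span ℂ (Set.range x) :=
    le_of_eq (hx.linearIndependent.span_eq_top_of_card_eq_finrank
      (by simp [finrank_euclideanSpace_fin])).symm
  set b : OrthonormalBasis (Fin n) ℂ (EuclideanSpace ℂ (Fin n)) :=
    OrthonormalBasis.mk hx hspan with hbdef
  have hb : ∀ j, b j = x j := fun j => congrFun (OrthonormalBasis.coe_mk hx hspan) j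
  have hxi : ∀ j k : Fin n, (inner ℂ (x j) (x k) : ℂ) = if j = k then 1 else 0 :=
    orthonormal_iff_ite.mp hx
  have hsym : (Matrix.toEuclideanLin A).IsSymmetric :=
    Matrix.isHermitian_iff_isSymmetric.mp hA
  have cA : ∀ (v : EuclideanSpace ℂ (Fin n)) (j : Fin n),
      (inner ℂ (x j) (Matrix.toEuclideanLin A v) : ℂ) = (lam j : ℂ) * inner ℂ (x j) v := by
    intro v j
    rw [← hsym (x j) v, heig j, inner_smul_left, Complex.conj_ofReal]
  have hinner : ∀ v : EuclideanSpace ℂ (Fin n), (inner ℂ v v : ℂ)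
      = ((∑ j, Complex.normSq (inner ℂ (x j) v : ℂ) : ℝ) : ℂ) := by
    intro v
    rw [← b.sum_inner_mul_inner v v]
    push_cast
    refine Finset.sum_congr rfl fun j _ => ?_
    rw [hb, ← inner_conj_symm v (x j), mul_comm, Complex.mul_conj]
  have hnorm : ∀ v : EuclideanSpace ℂ (Fin n),
      ‖v‖ ^ 2 = ∑ j, Complex.normSq (inner ℂ (x j) v : ℂ) := by
    intro v
    have h := inner_self_eq_norm_sq (𝕜 := ℂ) v
    rw [hinner v] at h
    simpa using h.symm
  have hrep : ∀ v : EuclideanSpace ℂ (Fin n), rayleigh A v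
      = (∑ j, lam j * Complex.normSq (inner ℂ (x j) v : ℂ))
        / (∑ j, Complex.normSq (inner ℂ (x j) v : ℂ)) := by
    intro v
    have h1 : (inner ℂ v (Matrix.toEuclideanLin A v) : ℂ)
        = ((∑ j, lam j * Complex.normSq (inner ℂ (x j) v : ℂ) : ℝ) : ℂ) := by
      rw [← b.sum_inner_mul_inner v (Matrix.toEuclideanLin A v)]
      push_cast
      refine Finset.sum_congr rfl fun j _ => ?_
      rw [hb, cA, ← inner_conj_symm v (x j)]
      have h2 : ((starRingEnd ℂ) (inner ℂ (x j) v) : ℂ) * ((lam j : ℂ) * inner ℂ (x j) v)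
          = (lam j : ℂ) * ((inner ℂ (x j) v : ℂ) * (starRingEnd ℂ) (inner ℂ (x j) v)) := by
        ring
      rw [h2, Complex.mul_conj]
    unfold rayleigh
    rw [h1, hnorm v]
    simp
  -- coefficients of the various vectors
  have hcyti : ∀ k : Fin n, (inner ℂ (x k) yti : ℂ)
      = if (k : ℕ) < i then (inner ℂ (x k) yt : ℂ) else 0 := by
    intro k
    rw [hyti, inner_sum]
    simp only [inner_smul_right, hxi, mul_ite, mul_one, mul_zero]
    rw [Finset.sum_ite_eq]
    simp [Finset.mem_filter]
  have hcz : ∀ k : Fin n, (inner ℂ (x k) (yt - yti) : ℂ)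
      = if (k : ℕ) < i then 0 else (inner ℂ (x k) yt : ℂ) := by
    intro k
    rw [inner_sub_right, hcyti k]
    split <;> simp
  have hcfA : ∀ (v : EuclideanSpace ℂ (Fin n)) (k : Fin n),
      (inner ℂ (x k) (matFun lam x f v) : ℂ) = (f (lam k) : ℂ) * inner ℂ (x k) v := by
    intro v k
    unfold matFun
    rw [LinearMap.sum_apply, inner_sum]
    simp only [LinearMap.smul_apply, LinearMap.smulRight_apply,
      ContinuousLinearMap.coe_coe, innerSL_apply_apply, inner_smul_right, hxi,
      mul_ite, mul_one, mul_zero]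
    rw [Finset.sum_ite_eq]
    simp
  have hcyto : ∀ k : Fin n, (inner ℂ (x k) yto : ℂ)
      = if (k : ℕ) < i then (f (lam ⟨i - 1, by omega⟩) : ℂ) * (inner ℂ (x k) yt : ℂ)
        else (νp : ℂ) * (inner ℂ (x k) yt : ℂ) := by
    intro k
    rw [hyto, inner_add_right, inner_smul_right, inner_smul_right, hcyti k, hcz k]
    split <;> simp
  -- vanishing of middle coefficients for members of Yt
  have hmid : ∀ v ∈ Yt, ∀ j : Fin n, i ≤ (j : ℕ) → (j : ℕ) < p →
      (inner ℂ (x j) v : ℂ) = 0 := by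
    intro v hv j h1 h2
    rw [hYt] at hv
    exact (Submodule.mem_orthogonal _ v).mp hv.1 (x j)
      (Submodule.subset_span ⟨j, ⟨h1, h2⟩, rfl⟩)
  have hYtY : Yt ≤ Y := by rw [hYt]; exact inf_le_right
  have hSpos : ∀ v : EuclideanSpace ℂ (Fin n), v ≠ 0 →
      0 < ∑ j, Complex.normSq (inner ℂ (x j) v : ℂ) := by
    intro v hv
    rw [← hnorm v]
    exact pow_pos (norm_pos_iff.mpr hv) 2
  have rb_low : ∀ v : EuclideanSpace ℂ (Fin n), v ≠ 0 →
      lam ⟨n - 1, by omega⟩ ≤ rayleigh A v := by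
    intro v hv
    rw [hrep v, le_div_iff₀ (hSpos v hv)]
    refine le_trans (le_of_eq (Finset.mul_sum _ _ _)) (Finset.sum_le_sum fun j _ => ?_)
    refine mul_le_mul_of_nonneg_right (hlam ?_) (Complex.normSq_nonneg _)
    have := j.isLt
    exact Fin.le_def.mpr (by simp; omega)
  have rb_high : ∀ v : EuclideanSpace ℂ (Fin n), v ≠ 0 →
      rayleigh A v ≤ lam ⟨0, hn0⟩ := by
    intro v hv
    rw [hrep v, div_le_iff₀ (hSpos v hv)]
    refine le_trans (Finset.sum_le_sum fun j _ => ?_) (le_of_eq (Finset.mul_sum _ _ _).symm)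
    exact mul_le_mul_of_nonneg_right (hlam (Fin.le_def.mpr (Nat.zero_le _)))
      (Complex.normSq_nonneg _)
  have ritz_le : ∀ (S : Submodule ℂ (EuclideanSpace ℂ (Fin n))) (k : ℕ),
      Module.finrank ℂ S = k → ∀ v ∈ S, v ≠ 0 → ritzValue A S k ≤ rayleigh A v := by
    intro S k hk v hv hv0
    unfold ritzValue
    refine csSup_le ⟨lam ⟨n - 1, by omega⟩, S, le_rfl, hk, fun u _ hu0 => rb_low u hu0⟩ ?_
    rintro r ⟨T, hTS, hTk, hr⟩
    have hTeq : T = S := Submodule.eq_of_le_of_finrank_eq hTS (by rw [hTk, hk])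
    exact hr v (hTeq ▸ hv) hv0
  have keyInj : ∀ v ∈ Yt, (∀ j : Fin n, (j : ℕ) < i → (inner ℂ (x j) v : ℂ) = 0) → v = 0 := by
    intro v hvYt hzero
    by_contra hv0
    have hvY : v ∈ Y := hYtY hvYt
    have hz : ∀ j : Fin n, (j : ℕ) < p → (inner ℂ (x j) v : ℂ) = 0 := by
      intro j hj
      rcases lt_or_ge (j : ℕ) i with h | h
      · exact hzero j h
      · exact hmid v hvYt j h hj
    have hle : rayleigh A v ≤ lam ⟨p, hpn⟩ := by
      rw [hrep v, div_le_iff₀ (hSpos v hv0)]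
      refine le_trans (Finset.sum_le_sum fun j _ => ?_) (le_of_eq (Finset.mul_sum _ _ _).symm)
      rcases lt_or_ge (j : ℕ) p with h | h
      · simp [hz j h]
      · exact mul_le_mul_of_nonneg_right (hlam (Fin.le_def.mpr h)) (Complex.normSq_nonneg _)
    have := ritz_le Y p hY v hvY hv0
    linarith
  have hWpos : 0 < ∑ j ∈ Finset.univ.filter (fun j : Fin n => (j : ℕ) < i),
      Complex.normSq (inner ℂ (x j) yt : ℂ) := by
    rcases (Finset.sum_nonneg fun j _ => Complex.normSq_nonneg
      ((inner ℂ (x j) yt : ℂ))).lt_or_eq with h | h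
    · exact h
    · exfalso
      apply hyt0
      refine keyInj yt hytY fun j hj => ?_
      have h2 := (Finset.sum_eq_zero_iff_of_nonneg fun k _ =>
        Complex.normSq_nonneg ((inner ℂ (x k) yt : ℂ))).mp h.symm
      exact Complex.normSq_eq_zero.mp (h2 j (Finset.mem_filter.mpr ⟨Finset.mem_univ j, hj⟩))
  have hMle : Module.finrank ℂ
      ↥(Submodule.span ℂ (x '' {j | i ≤ (j : ℕ) ∧ (j : ℕ) < p})) ≤ p - i := by
    have hset : x '' {j | i ≤ (j : ℕ) ∧ (j : ℕ) < p}
        = ↑((Finset.univ.filter fun j : Fin n => i ≤ (j : ℕ) ∧ (j : ℕ) < p).image x) := by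
      ext v
      simp [Set.mem_image]
    rw [hset]
    refine le_trans (finrank_span_finset_le_card _) (le_trans Finset.card_image_le ?_)
    have hcard := Finset.card_le_card_of_injOn
      (s := Finset.univ.filter fun j : Fin n => i ≤ (j : ℕ) ∧ (j : ℕ) < p)
      (t := Finset.Ico i p) (fun j : Fin n => (j : ℕ))
      (fun a ha => by
        simp at ha ⊢
        omega)
      (fun a _ b _ hab => Fin.val_injective hab)
    simpa [Nat.card_Ico] using hcard
  have hdimYt_ge : i ≤ Module.finrank ℂ Yt := by
    set M := Submodule.span ℂ (x '' {j | i ≤ (j : ℕ) ∧ (j : ℕ) < p}) with hM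
    have h1 := Submodule.finrank_sup_add_finrank_inf_eq Mᗮ Y
    have h2 := Submodule.finrank_add_finrank_orthogonal M
    have h3 : Module.finrank ℂ ↥(Mᗮ ⊔ Y) ≤ n :=
      le_trans (Submodule.finrank_le _) (le_of_eq finrank_euclideanSpace_fin)
    rw [finrank_euclideanSpace_fin] at h2
    rw [hYt]
    omega
  have hdimYt_le : Module.finrank ℂ Yt ≤ i := by
    set L : EuclideanSpace ℂ (Fin n) →ₗ[ℂ] (Fin i → ℂ) :=
      LinearMap.pi fun jj : Fin i => (innerSL ℂ (x (Fin.castLE hin jj))).toLinearMap with hL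
    have hinj : Function.Injective (L.domRestrict Yt) := by
      rw [← LinearMap.ker_eq_bot, Submodule.eq_bot_iff]
      rintro ⟨v, hv⟩ hker
      have hker' : L v = 0 := by
        have := LinearMap.mem_ker.mp hker
        rwa [LinearMap.domRestrict_apply] at this
      have h0 : ∀ j : Fin n, (j : ℕ) < i → (inner ℂ (x j) v : ℂ) = 0 := by
        intro j hj
        have h1 := congrFun hker' ⟨(j : ℕ), hj⟩
        rw [hL] at h1
        simp only [LinearMap.pi_apply, ContinuousLinearMap.coe_coe, innerSL_apply_apply,
          Pi.zero_apply] at h1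
        have hcast : Fin.castLE hin (⟨(j : ℕ), hj⟩ : Fin i) = j := Fin.ext rfl
        rwa [hcast] at h1
      have hv0 : v = 0 := keyInj v hv h0
      exact Subtype.ext hv0
    have hfr := LinearMap.finrank_le_finrank_of_injective hinj
    simpa [Module.finrank_pi] using hfr
  have hdimYt : Module.finrank ℂ Yt = i := le_antisymm hdimYt_le hdimYt_ge
  have hbdd : BddAbove {r : ℝ | ∃ T : Submodule ℂ (EuclideanSpace ℂ (Fin n)), T ≤ Yt ∧
      Module.finrank ℂ T = i ∧ ∀ v ∈ T, v ≠ 0 → r ≤ rayleigh A v} := by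
    refine ⟨lam ⟨0, hn0⟩, ?_⟩
    rintro r ⟨T, hTle, hTi, hr⟩
    have hT0 : T ≠ ⊥ := by
      intro h
      rw [h, finrank_bot] at hTi
      omega
    obtain ⟨v, hvT, hv0⟩ := Submodule.exists_mem_ne_zero_of_ne_bot hT0
    exact le_trans (hr v hvT hv0) (rb_high v hv0)
  have ritz_mono : ritzValue A Y p ≤ ritzValue A Yt i := by
    unfold ritzValue
    refine csSup_le_csSup hbdd ⟨lam ⟨n - 1, by omega⟩, Y, le_rfl, hY,
      fun u _ hu0 => rb_low u hu0⟩ ?_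
    rintro r ⟨T, hTY, hTp, hr⟩
    have hTeq : T = Y := Submodule.eq_of_le_of_finrank_eq hTY (by rw [hTp, hY])
    exact ⟨Yt, le_rfl, hdimYt, fun v hv hv0 => hr v (hTeq ▸ hYtY hv) hv0⟩
  have r5 : lam ⟨p, hpn⟩ < ritzValue A Yt i := lt_of_lt_of_le hηp ritz_mono
  have r4 : ritzValue A Yt i ≤ rayleigh A yt := ritz_le Yt i hdimYt yt hytY hyt0

  -- scalar facts
  have hνp0 : 0 ≤ νp := by
    obtain ⟨j, -, hj⟩ := hνp.1
    rw [← hj]; exact abs_nonneg _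
  have hF2pos : (0:ℝ) < f (lam ⟨i - 1, by omega⟩) ^ 2 := by
    have h1 : 0 < |f (lam ⟨i - 1, by omega⟩)| := lt_of_le_of_lt hνp0 hgt
    calc (0:ℝ) < |f (lam ⟨i - 1, by omega⟩)| ^ 2 := pow_pos h1 2
    _ = _ := sq_abs _
  have hN2F2 : νp ^ 2 ≤ f (lam ⟨i - 1, by omega⟩) ^ 2 := by
    have h2 := pow_le_pow_left₀ hνp0 hgt.le 2
    calc νp ^ 2 ≤ |f (lam ⟨i - 1, by omega⟩)| ^ 2 := h2
    _ = _ := sq_abs _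
  have hfge : ∀ j : Fin n, (j : ℕ) < i → f (lam ⟨i - 1, by omega⟩) ^ 2 ≤ f (lam j) ^ 2 := by
    intro j hj
    have h1 := hmono j ⟨i - 1, by omega⟩ (by simp; omega) (by simp; omega)
    calc f (lam ⟨i - 1, by omega⟩) ^ 2 = |f (lam ⟨i - 1, by omega⟩)| ^ 2 := (sq_abs _).symm
    _ ≤ |f (lam j)| ^ 2 := pow_le_pow_left₀ (abs_nonneg _) h1 2
    _ = f (lam j) ^ 2 := sq_abs _
  have hfle : ∀ j : Fin n, p ≤ (j : ℕ) → f (lam j) ^ 2 ≤ νp ^ 2 := by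
    intro j hj
    have h1 : |f (lam j)| ≤ νp := hνp.2 ⟨j, hj, rfl⟩
    calc f (lam j) ^ 2 = |f (lam j)| ^ 2 := (sq_abs _).symm
    _ ≤ νp ^ 2 := pow_le_pow_left₀ (abs_nonneg _) h1 2
  have hwzero : ∀ j : Fin n, ¬ (j : ℕ) < i → Complex.normSq (inner ℂ (x j) yt : ℂ) ≠ 0 → p ≤ (j : ℕ) := by
    intro j h1 h2
    by_contra h3
    push_neg at h3
    exact h2 (by rw [hmid yt hytY j (by omega) (by omega)]; simp)
  have hlamle : ∀ j k : Fin n, (j : ℕ) ≤ (k : ℕ) → lam k ≤ lam j :=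
    fun j k h => hlam (Fin.le_def.mpr h)
  -- splitting of sums over univ
  have hsplit : ∀ q : Fin n → ℝ, (∑ j, q j)
      = (∑ j ∈ Finset.univ.filter (fun j : Fin n => (j : ℕ) < i), q j) + (∑ j ∈ Finset.univ.filter (fun j : Fin n => ¬ (j : ℕ) < i), q j) :=
    fun q => (Finset.sum_filter_add_sum_filter_not Finset.univ _ q).symm
  -- positivity of sums
  have hUv0 : (0:ℝ) ≤ (∑ j ∈ Finset.univ.filter (fun j : Fin n => ¬ (j : ℕ) < i), Complex.normSq (inner ℂ (x j) yt : ℂ)) :=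
    Finset.sum_nonneg fun j _ => Complex.normSq_nonneg _
  have hWUpos : (0:ℝ) < (∑ j ∈ Finset.univ.filter (fun j : Fin n => (j : ℕ) < i), Complex.normSq (inner ℂ (x j) yt : ℂ)) + (∑ j ∈ Finset.univ.filter (fun j : Fin n => ¬ (j : ℕ) < i), Complex.normSq (inner ℂ (x j) yt : ℂ)) := by positivity
  have hQU : (∑ j ∈ Finset.univ.filter (fun j : Fin n => ¬ (j : ℕ) < i), Complex.normSq (inner ℂ (x j) yt : ℂ)) = 0 → (∑ j ∈ Finset.univ.filter (fun j : Fin n => ¬ (j : ℕ) < i), lam j * Complex.normSq (inner ℂ (x j) yt : ℂ)) = 0 := by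
    intro h
    have h2 := (Finset.sum_eq_zero_iff_of_nonneg fun k _ =>
      Complex.normSq_nonneg ((inner ℂ (x k) yt : ℂ))).mp h
    exact Finset.sum_eq_zero fun j hj => by rw [h2 j hj]; ring
  have hDpos : (0:ℝ) < f (lam ⟨i - 1, by omega⟩) ^ 2 * (∑ j ∈ Finset.univ.filter (fun j : Fin n => (j : ℕ) < i), Complex.normSq (inner ℂ (x j) yt : ℂ)) + νp ^ 2 * (∑ j ∈ Finset.univ.filter (fun j : Fin n => ¬ (j : ℕ) < i), Complex.normSq (inner ℂ (x j) yt : ℂ)) := by positivity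
  -- Rayleigh quotient formulas
  have ρyt : rayleigh A yt = ((∑ j ∈ Finset.univ.filter (fun j : Fin n => (j : ℕ) < i), lam j * Complex.normSq (inner ℂ (x j) yt : ℂ)) + (∑ j ∈ Finset.univ.filter (fun j : Fin n => ¬ (j : ℕ) < i), lam j * Complex.normSq (inner ℂ (x j) yt : ℂ))) / ((∑ j ∈ Finset.univ.filter (fun j : Fin n => (j : ℕ) < i), Complex.normSq (inner ℂ (x j) yt : ℂ)) + (∑ j ∈ Finset.univ.filter (fun j : Fin n => ¬ (j : ℕ) < i), Complex.normSq (inner ℂ (x j) yt : ℂ))) := by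
    rw [hrep yt, hsplit (fun j => lam j * Complex.normSq (inner ℂ (x j) yt : ℂ)), hsplit (fun j => Complex.normSq (inner ℂ (x j) yt : ℂ))]
  have hterm_yti : ∀ j : Fin n, Complex.normSq (inner ℂ (x j) yti : ℂ)
      = if (j : ℕ) < i then Complex.normSq (inner ℂ (x j) yt : ℂ) else 0 := by
    intro j
    rw [hcyti j]
    split <;> simp
  have ρyti : rayleigh A yti = (∑ j ∈ Finset.univ.filter (fun j : Fin n => (j : ℕ) < i), lam j * Complex.normSq (inner ℂ (x j) yt : ℂ)) / (∑ j ∈ Finset.univ.filter (fun j : Fin n => (j : ℕ) < i), Complex.normSq (inner ℂ (x j) yt : ℂ)) := by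
    rw [hrep yti]
    simp only [hterm_yti, mul_ite, mul_zero]
    rw [← Finset.sum_filter, ← Finset.sum_filter]
  have hterm_z : ∀ j : Fin n, Complex.normSq (inner ℂ (x j) (yt - yti) : ℂ)
      = if ¬ (j : ℕ) < i then Complex.normSq (inner ℂ (x j) yt : ℂ) else 0 := by
    intro j
    rw [hcz j]
    by_cases h : (j : ℕ) < i <;> simp [h]
  have ρz : rayleigh A (yt - yti) = (∑ j ∈ Finset.univ.filter (fun j : Fin n => ¬ (j : ℕ) < i), lam j * Complex.normSq (inner ℂ (x j) yt : ℂ)) / (∑ j ∈ Finset.univ.filter (fun j : Fin n => ¬ (j : ℕ) < i), Complex.normSq (inner ℂ (x j) yt : ℂ)) := by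
    rw [hrep (yt - yti)]
    simp only [hterm_z, mul_ite, mul_zero]
    rw [← Finset.sum_filter, ← Finset.sum_filter]
  have hterm_yto : ∀ j : Fin n, Complex.normSq (inner ℂ (x j) yto : ℂ)
      = (if (j : ℕ) < i then f (lam ⟨i - 1, by omega⟩) ^ 2 else νp ^ 2) * Complex.normSq (inner ℂ (x j) yt : ℂ) := by
    intro j
    rw [hcyto j]
    by_cases h : (j : ℕ) < i <;>
      simp [h, Complex.normSq_mul, Complex.normSq_ofReal, sq]
  have hterm_f : ∀ j : Fin n, Complex.normSq (inner ℂ (x j) (matFun lam x f yt) : ℂ)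
      = f (lam j) ^ 2 * Complex.normSq (inner ℂ (x j) yt : ℂ) := by
    intro j
    rw [hcfA yt j]
    simp [Complex.normSq_mul, Complex.normSq_ofReal, sq]
  -- splitting with piecewise-constant multipliers
  have hconstsplit : ∀ C1 C2 : ℝ,
      (∑ j : Fin n, (if (j : ℕ) < i then C1 else C2) * Complex.normSq (inner ℂ (x j) yt : ℂ))
        = C1 * (∑ j ∈ Finset.univ.filter (fun j : Fin n => (j : ℕ) < i), Complex.normSq (inner ℂ (x j) yt : ℂ)) + C2 * (∑ j ∈ Finset.univ.filter (fun j : Fin n => ¬ (j : ℕ) < i), Complex.normSq (inner ℂ (x j) yt : ℂ)) := by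
    intro C1 C2
    rw [hsplit (fun j : Fin n => (if (j : ℕ) < i then C1 else C2) * Complex.normSq (inner ℂ (x j) yt : ℂ))]
    congr 1
    · rw [Finset.mul_sum]
      refine Finset.sum_congr rfl fun j hj => ?_
      rw [if_pos (Finset.mem_filter.mp hj).2]
    · rw [Finset.mul_sum]
      refine Finset.sum_congr rfl fun j hj => ?_
      rw [if_neg (Finset.mem_filter.mp hj).2]
  have hlamsplit : ∀ C1 C2 : ℝ,
      (∑ j : Fin n, lam j * ((if (j : ℕ) < i then C1 else C2) * Complex.normSq (inner ℂ (x j) yt : ℂ)))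
        = C1 * (∑ j ∈ Finset.univ.filter (fun j : Fin n => (j : ℕ) < i), lam j * Complex.normSq (inner ℂ (x j) yt : ℂ)) + C2 * (∑ j ∈ Finset.univ.filter (fun j : Fin n => ¬ (j : ℕ) < i), lam j * Complex.normSq (inner ℂ (x j) yt : ℂ)) := by
    intro C1 C2
    rw [hsplit (fun j : Fin n => lam j * ((if (j : ℕ) < i then C1 else C2) * Complex.normSq (inner ℂ (x j) yt : ℂ)))]
    congr 1
    · rw [Finset.mul_sum]
      refine Finset.sum_congr rfl fun j hj => ?_
      rw [if_pos (Finset.mem_filter.mp hj).2]; ring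
    · rw [Finset.mul_sum]
      refine Finset.sum_congr rfl fun j hj => ?_
      rw [if_neg (Finset.mem_filter.mp hj).2]; ring
  have ρyto : rayleigh A yto
      = (f (lam ⟨i - 1, by omega⟩) ^ 2 * (∑ j ∈ Finset.univ.filter (fun j : Fin n => (j : ℕ) < i), lam j * Complex.normSq (inner ℂ (x j) yt : ℂ)) + νp ^ 2 * (∑ j ∈ Finset.univ.filter (fun j : Fin n => ¬ (j : ℕ) < i), lam j * Complex.normSq (inner ℂ (x j) yt : ℂ))) / (f (lam ⟨i - 1, by omega⟩) ^ 2 * (∑ j ∈ Finset.univ.filter (fun j : Fin n => (j : ℕ) < i), Complex.normSq (inner ℂ (x j) yt : ℂ)) + νp ^ 2 * (∑ j ∈ Finset.univ.filter (fun j : Fin n => ¬ (j : ℕ) < i), Complex.normSq (inner ℂ (x j) yt : ℂ))) := by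
    rw [hrep yto]
    simp only [hterm_yto]
    rw [hlamsplit, hconstsplit]

  have ρfyt : rayleigh A (matFun lam x f yt)
      = (∑ j : Fin n, lam j * (f (lam j) ^ 2 * Complex.normSq (inner ℂ (x j) yt : ℂ)))
        / (∑ j : Fin n, f (lam j) ^ 2 * Complex.normSq (inner ℂ (x j) yt : ℂ)) := by
    rw [hrep (matFun lam x f yt)]
    simp only [hterm_f]
  have hwCnn : ∀ j : Fin n, (0:ℝ) ≤ (if (j : ℕ) < i then f (lam ⟨i - 1, by omega⟩) ^ 2 else f (lam j) ^ 2) * Complex.normSq (inner ℂ (x j) yt : ℂ) :=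
    fun j => mul_nonneg (by split <;> positivity) (Complex.normSq_nonneg _)
  have hUC : (0:ℝ) < ∑ j : Fin n, (if (j : ℕ) < i then f (lam ⟨i - 1, by omega⟩) ^ 2 else f (lam j) ^ 2) * Complex.normSq (inner ℂ (x j) yt : ℂ) := by
    have e : ∑ j ∈ Finset.univ.filter (fun j : Fin n => (j : ℕ) < i), (if (j : ℕ) < i then f (lam ⟨i - 1, by omega⟩) ^ 2 else f (lam j) ^ 2) * Complex.normSq (inner ℂ (x j) yt : ℂ) = f (lam ⟨i - 1, by omega⟩) ^ 2 * (∑ j ∈ Finset.univ.filter (fun j : Fin n => (j : ℕ) < i), Complex.normSq (inner ℂ (x j) yt : ℂ)) := by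
      rw [Finset.mul_sum]
      refine Finset.sum_congr rfl fun j hj => ?_
      rw [if_pos (Finset.mem_filter.mp hj).2]
    calc (0:ℝ) < f (lam ⟨i - 1, by omega⟩) ^ 2 * (∑ j ∈ Finset.univ.filter (fun j : Fin n => (j : ℕ) < i), Complex.normSq (inner ℂ (x j) yt : ℂ)) := mul_pos hF2pos hWpos
    _ = ∑ j ∈ Finset.univ.filter (fun j : Fin n => (j : ℕ) < i), (if (j : ℕ) < i then f (lam ⟨i - 1, by omega⟩) ^ 2 else f (lam j) ^ 2) * Complex.normSq (inner ℂ (x j) yt : ℂ) := e.symm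
    _ ≤ _ := Finset.sum_le_sum_of_subset_of_nonneg (Finset.subset_univ _)
        (fun j _ _ => hwCnn j)
  -- Step 1 : ρ(yt) ≤ ρ(yto)
  have ineq1 : ((∑ j ∈ Finset.univ.filter (fun j : Fin n => (j : ℕ) < i), lam j * Complex.normSq (inner ℂ (x j) yt : ℂ)) + (∑ j ∈ Finset.univ.filter (fun j : Fin n => ¬ (j : ℕ) < i), lam j * Complex.normSq (inner ℂ (x j) yt : ℂ))) / ((∑ j ∈ Finset.univ.filter (fun j : Fin n => (j : ℕ) < i), Complex.normSq (inner ℂ (x j) yt : ℂ)) + (∑ j ∈ Finset.univ.filter (fun j : Fin n => ¬ (j : ℕ) < i), Complex.normSq (inner ℂ (x j) yt : ℂ)))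
      ≤ (f (lam ⟨i - 1, by omega⟩) ^ 2 * (∑ j ∈ Finset.univ.filter (fun j : Fin n => (j : ℕ) < i), lam j * Complex.normSq (inner ℂ (x j) yt : ℂ)) + νp ^ 2 * (∑ j ∈ Finset.univ.filter (fun j : Fin n => ¬ (j : ℕ) < i), lam j * Complex.normSq (inner ℂ (x j) yt : ℂ))) / (f (lam ⟨i - 1, by omega⟩) ^ 2 * (∑ j ∈ Finset.univ.filter (fun j : Fin n => (j : ℕ) < i), Complex.normSq (inner ℂ (x j) yt : ℂ)) + νp ^ 2 * (∑ j ∈ Finset.univ.filter (fun j : Fin n => ¬ (j : ℕ) < i), Complex.normSq (inner ℂ (x j) yt : ℂ))) := by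
    have hch := ray_cheby Finset.univ lam (fun j : Fin n => Complex.normSq (inner ℂ (x j) yt : ℂ))
      (fun j : Fin n => if (j : ℕ) < i then f (lam ⟨i - 1, by omega⟩) ^ 2 else νp ^ 2)
      (by
        intro j _ k _
        beta_reduce
        rcases lt_or_ge (j : ℕ) i with hj | hj <;> rcases lt_or_ge (k : ℕ) i with hk | hk
        · simp [hj, hk]
        · rw [if_pos hj, if_neg (not_lt.mpr hk)]
          have h1 : lam k ≤ lam j := hlamle j k (by omega)
          exact mul_nonneg
            (mul_nonneg (Complex.normSq_nonneg _) (Complex.normSq_nonneg _))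
            (mul_nonneg (by linarith) (by linarith [hN2F2]))
        · rw [if_neg (not_lt.mpr hj), if_pos hk]
          have h1 : lam j ≤ lam k := hlamle k j (by omega)
          have h2 := mul_nonneg (neg_nonneg.mpr (show lam j - lam k ≤ 0 by linarith))
            (neg_nonneg.mpr (show νp ^ 2 - f (lam ⟨i - 1, by omega⟩) ^ 2 ≤ 0 by linarith [hN2F2]))
          rw [neg_mul_neg] at h2
          exact mul_nonneg
            (mul_nonneg (Complex.normSq_nonneg _) (Complex.normSq_nonneg _)) h2
        · simp [not_lt.mpr hj, not_lt.mpr hk])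
      (hSpos yt hyt0)
      (by
        beta_reduce
        rw [hconstsplit]
        nlinarith [mul_pos hF2pos hWpos, mul_nonneg (sq_nonneg νp) hUv0])
    beta_reduce at hch
    rw [hlamsplit, hconstsplit,
        hsplit (fun j => lam j * Complex.normSq (inner ℂ (x j) yt : ℂ)), hsplit (fun j => Complex.normSq (inner ℂ (x j) yt : ℂ))] at hch
    exact hch
  have r3 : rayleigh A yt ≤ rayleigh A yto := by
    rw [ρyt, ρyto]
    exact ineq1
  have hmid2 : lam ⟨p, hpn⟩
      ≤ (f (lam ⟨i - 1, by omega⟩) ^ 2 * (∑ j ∈ Finset.univ.filter (fun j : Fin n => (j : ℕ) < i), lam j * Complex.normSq (inner ℂ (x j) yt : ℂ)) + νp ^ 2 * (∑ j ∈ Finset.univ.filter (fun j : Fin n => ¬ (j : ℕ) < i), lam j * Complex.normSq (inner ℂ (x j) yt : ℂ))) / (f (lam ⟨i - 1, by omega⟩) ^ 2 * (∑ j ∈ Finset.univ.filter (fun j : Fin n => (j : ℕ) < i), Complex.normSq (inner ℂ (x j) yt : ℂ)) + νp ^ 2 * (∑ j ∈ Finset.univ.filter (fun j : Fin n => ¬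 (j : ℕ) < i), Complex.normSq (inner ℂ (x j) yt : ℂ))) := by
    have h1 := le_trans r4 r3
    rw [ρyto] at h1
    linarith [r5]
  -- Step 2 : ρ(yto) ≤ intermediate
  have ineq2 : (f (lam ⟨i - 1, by omega⟩) ^ 2 * (∑ j ∈ Finset.univ.filter (fun j : Fin n => (j : ℕ) < i), lam j * Complex.normSq (inner ℂ (x j) yt : ℂ)) + νp ^ 2 * (∑ j ∈ Finset.univ.filter (fun j : Fin n => ¬ (j : ℕ) < i), lam j * Complex.normSq (inner ℂ (x j) yt : ℂ))) / (f (lam ⟨i - 1, by omega⟩) ^ 2 * (∑ j ∈ Finset.univ.filter (fun j : Fin n => (j : ℕ) < i), Complex.normSq (inner ℂ (x j) yt : ℂ)) + νp ^ 2 * (∑ j ∈ Finset.univ.filter (fun j : Fin n => ¬ (j : ℕ) < i), Complex.normSq (inner ℂ (x j) yt : ℂ)))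
      ≤ (∑ j : Fin n, lam j * ((if (j : ℕ) < i then f (lam ⟨i - 1, by omega⟩) ^ 2 else f (lam j) ^ 2) * Complex.normSq (inner ℂ (x j) yt : ℂ))) / (∑ j : Fin n, (if (j : ℕ) < i then f (lam ⟨i - 1, by omega⟩) ^ 2 else f (lam j) ^ 2) * Complex.normSq (inner ℂ (x j) yt : ℂ)) := by
    have hd := ray_dec Finset.univ lam
      (fun j : Fin n => (if (j : ℕ) < i then f (lam ⟨i - 1, by omega⟩) ^ 2 else νp ^ 2) * Complex.normSq (inner ℂ (x j) yt : ℂ))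
      (fun j : Fin n => (if (j : ℕ) < i then f (lam ⟨i - 1, by omega⟩) ^ 2 else f (lam j) ^ 2) * Complex.normSq (inner ℂ (x j) yt : ℂ))
      (lam ⟨p, hpn⟩)
      (fun j => hwCnn j)
      (by
        intro j
        beta_reduce
        by_cases hj : (j : ℕ) < i
        · rw [if_pos hj, if_pos hj]
        · rw [if_neg hj, if_neg hj]
          rcases eq_or_ne (Complex.normSq (inner ℂ (x j) yt : ℂ)) 0 with h0 | h0
          · rw [h0, mul_zero, mul_zero]
          · exact mul_le_mul_of_nonneg_right (hfle j (hwzero j hj h0))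
              (Complex.normSq_nonneg _))
      (by
        intro j _ hne
        beta_reduce at hne
        by_cases hj : (j : ℕ) < i
        · rw [if_pos hj, if_pos hj] at hne
          exact absurd rfl hne
        · rcases eq_or_ne (Complex.normSq (inner ℂ (x j) yt : ℂ)) 0 with h0 | h0
          · rw [if_neg hj, if_neg hj, h0, mul_zero, mul_zero] at hne
            exact absurd rfl hne
          · exact hlamle ⟨p, hpn⟩ j (hwzero j hj h0))
      hUC
      (by
        beta_reduce
        rw [hlamsplit, hconstsplit]
        exact hmid2)
    beta_reduce at hd
    rw [hlamsplit, hconstsplit] at hd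
    exact hd
  -- Step 3 : intermediate ≤ ρ(f(A)yt)
  have m2key : ∀ a c : Fin n, lam c < lam a → Complex.normSq (inner ℂ (x a) yt : ℂ) ≠ 0 → Complex.normSq (inner ℂ (x c) yt : ℂ) ≠ 0 →
      (if (c : ℕ) < i then f (lam c) ^ 2 / f (lam ⟨i - 1, by omega⟩) ^ 2 else 1) ≤ (if (a : ℕ) < i then f (lam a) ^ 2 / f (lam ⟨i - 1, by omega⟩) ^ 2 else 1) := by
    intro a c hlt' ha hc
    by_cases hai : (a : ℕ) < i <;> by_cases hci : (c : ℕ) < i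
    · rw [if_pos hai, if_pos hci]
      have hac : (a : ℕ) ≤ (c : ℕ) := by
        by_contra h
        push_neg at h
        have := hlamle c a (by omega)
        linarith
      have h1 := hmono a c hac hci
      have h2 : f (lam c) ^ 2 ≤ f (lam a) ^ 2 := by
        calc f (lam c) ^ 2 = |f (lam c)| ^ 2 := (sq_abs _).symm
        _ ≤ |f (lam a)| ^ 2 := pow_le_pow_left₀ (abs_nonneg _) h1 2
        _ = f (lam a) ^ 2 := sq_abs _
      rw [div_le_div_iff₀ hF2pos hF2pos]
      nlinarith [h2, hF2pos]
    · rw [if_pos hai, if_neg hci]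
      rw [le_div_iff₀ hF2pos, one_mul]
      exact hfge a hai
    · exfalso
      have hpa : p ≤ (a : ℕ) := hwzero a hai ha
      have h1 : lam a ≤ lam ⟨p, hpn⟩ := hlamle ⟨p, hpn⟩ a hpa
      have h2 : lam ⟨p, hpn⟩ ≤ lam ⟨i - 1, by omega⟩ :=
        hlamle ⟨i - 1, by omega⟩ ⟨p, hpn⟩ (by simp; omega)
      have h3 : lam ⟨i - 1, by omega⟩ ≤ lam c := hlamle c ⟨i - 1, by omega⟩ (by simp; omega)
      linarith
    · rw [if_neg hai, if_neg hci]
  have hmu : ∀ j : Fin n, (if (j : ℕ) < i then f (lam j) ^ 2 / f (lam ⟨i - 1, by omega⟩) ^ 2 else 1) * ((if (j : ℕ) < i then f (lam ⟨i - 1, by omega⟩) ^ 2 else f (lam j) ^ 2) * Complex.normSq (inner ℂ (x j) yt : ℂ)) = f (lam j) ^ 2 * Complex.normSq (inner ℂ (x j) yt : ℂ) := by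
    intro j
    by_cases hj : (j : ℕ) < i
    · rw [if_pos hj, if_pos hj]
      rw [div_mul_eq_mul_div, div_eq_iff hF2pos.ne']
      ring
    · rw [if_neg hj, if_neg hj]
      ring
  have ineq3 : (∑ j : Fin n, lam j * ((if (j : ℕ) < i then f (lam ⟨i - 1, by omega⟩) ^ 2 else f (lam j) ^ 2) * Complex.normSq (inner ℂ (x j) yt : ℂ))) / (∑ j : Fin n, (if (j : ℕ) < i then f (lam ⟨i - 1, by omega⟩) ^ 2 else f (lam j) ^ 2) * Complex.normSq (inner ℂ (x j) yt : ℂ))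
      ≤ (∑ j : Fin n, lam j * (f (lam j) ^ 2 * Complex.normSq (inner ℂ (x j) yt : ℂ)))
        / (∑ j : Fin n, f (lam j) ^ 2 * Complex.normSq (inner ℂ (x j) yt : ℂ)) := by
    have hch := ray_cheby Finset.univ lam
      (fun j : Fin n => (if (j : ℕ) < i then f (lam ⟨i - 1, by omega⟩) ^ 2 else f (lam j) ^ 2) * Complex.normSq (inner ℂ (x j) yt : ℂ))
      (fun j : Fin n => (if (j : ℕ) < i then f (lam j) ^ 2 / f (lam ⟨i - 1, by omega⟩) ^ 2 else 1))
      (by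
        intro j _ k _
        beta_reduce
        rcases eq_or_ne (Complex.normSq (inner ℂ (x j) yt : ℂ)) 0 with h0 | h0
        · rw [h0, mul_zero, zero_mul, zero_mul]
        rcases eq_or_ne (Complex.normSq (inner ℂ (x k) yt : ℂ)) 0 with h1 | h1
        · rw [h1, mul_zero, mul_zero, zero_mul]
        rcases lt_trichotomy (lam j) (lam k) with hl | hl | hl
        · have hm := m2key k j hl h1 h0
          have h2 := mul_nonneg (neg_nonneg.mpr (show lam j - lam k ≤ 0 by linarith))
            (neg_nonneg.mpr (show (if (j : ℕ) < i then f (lam j) ^ 2 / f (lam ⟨i - 1, by omega⟩) ^ 2 else 1) - (if (k : ℕ) < i then f (lam k) ^ 2 / f (lam ⟨i - 1, by omega⟩) ^ 2 else 1) ≤ 0 by linarith))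
          rw [neg_mul_neg] at h2
          exact mul_nonneg (mul_nonneg (hwCnn j) (hwCnn k)) h2
        · rw [hl]
          simp
        · have hm := m2key j k hl h0 h1
          exact mul_nonneg (mul_nonneg (hwCnn j) (hwCnn k))
            (mul_nonneg (by linarith) (by linarith)))
      hUC
      (by
        beta_reduce
        have e2 : ∑ j : Fin n, (if (j : ℕ) < i then f (lam j) ^ 2 / f (lam ⟨i - 1, by omega⟩) ^ 2 else 1) * ((if (j : ℕ) < i then f (lam ⟨i - 1, by omega⟩) ^ 2 else f (lam j) ^ 2) * Complex.normSq (inner ℂ (x j) yt : ℂ)) = ∑ j : Fin n, f (lam j) ^ 2 * Complex.normSq (inner ℂ (x j) yt : ℂ) :=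
          Finset.sum_congr rfl fun j _ => hmu j
        rw [e2]
        have e3 : ∑ j ∈ Finset.univ.filter (fun j : Fin n => (j : ℕ) < i), f (lam ⟨i - 1, by omega⟩) ^ 2 * Complex.normSq (inner ℂ (x j) yt : ℂ) ≤ ∑ j ∈ Finset.univ.filter (fun j : Fin n => (j : ℕ) < i), f (lam j) ^ 2 * Complex.normSq (inner ℂ (x j) yt : ℂ) := by
          refine Finset.sum_le_sum fun j hj => ?_
          exact mul_le_mul_of_nonneg_right (hfge j (Finset.mem_filter.mp hj).2)
            (Complex.normSq_nonneg _)
        have e4 : ∑ j ∈ Finset.univ.filter (fun j : Fin n => (j : ℕ) < i), f (lam ⟨i - 1, by omega⟩) ^ 2 * Complex.normSq (inner ℂ (x j) yt : ℂ) = f (lam ⟨i - 1, by omega⟩) ^ 2 * (∑ j ∈ Finset.univ.filter (fun j : Fin n => (j : ℕ) < i), Complex.normSq (inner ℂ (x j) yt : ℂ)) := (Finset.mul_sum _ _ _).symm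
        have e5 : ∑ j ∈ Finset.univ.filter (fun j : Fin n => (j : ℕ) < i), f (lam j) ^ 2 * Complex.normSq (inner ℂ (x j) yt : ℂ)
            ≤ ∑ j : Fin n, f (lam j) ^ 2 * Complex.normSq (inner ℂ (x j) yt : ℂ) :=
          Finset.sum_le_sum_of_subset_of_nonneg (Finset.subset_univ _)
            (fun j _ _ => mul_nonneg (by positivity) (Complex.normSq_nonneg _))
        have := mul_pos hF2pos hWpos
        linarith)
    have e6 : ∑ j : Fin n, lam j * ((if (j : ℕ) < i then f (lam j) ^ 2 / f (lam ⟨i - 1, by omega⟩) ^ 2 else 1) * ((if (j : ℕ) < i then f (lam ⟨i - 1, by omega⟩) ^ 2 else f (lam j) ^ 2) * Complex.normSq (inner ℂ (x j) yt : ℂ))) = ∑ j : Fin n, lam j * (f (lam j) ^ 2 * Complex.normSq (inner ℂ (x j) yt : ℂ)) :=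
      Finset.sum_congr rfl fun j _ => by rw [hmu j]
    have e7 : ∑ j : Fin n, (if (j : ℕ) < i then f (lam j) ^ 2 / f (lam ⟨i - 1, by omega⟩) ^ 2 else 1) * ((if (j : ℕ) < i then f (lam ⟨i - 1, by omega⟩) ^ 2 else f (lam j) ^ 2) * Complex.normSq (inner ℂ (x j) yt : ℂ)) = ∑ j : Fin n, f (lam j) ^ 2 * Complex.normSq (inner ℂ (x j) yt : ℂ) :=
      Finset.sum_congr rfl fun j _ => hmu j
    beta_reduce at hch
    rw [e6, e7] at hch
    exact hch
  have r2 : rayleigh A yto ≤ rayleigh A (matFun lam x f yt) := by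
    rw [ρyto, ρfyt]
    exact le_trans ineq2 ineq3
  refine ⟨⟨hlt, hRitz.2.2.1.symm, r2, r3, r4, r5⟩, ?_⟩
  rw [ρyti, ρyto, ρz, ρyt]
  have habs : |f (lam ⟨i - 1, by omega⟩)| ^ 2 = f (lam ⟨i - 1, by omega⟩) ^ 2 := sq_abs _
  rw [habs]
  exact ray_eq _ _ _ _ _ _ hWpos hUv0 hF2pos hQU hWUpos hDpos
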